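/- Let C = [[6,1],[5,1]] over ℤ and Lₖ the Lucas numbers. Then for all n ≥ 1, trace(C^n) = L_{4n}, and hence |det(C^n + I)| = L_{4n} + 2 and |det(C^n − I)| = L_{4n} − 2. -/
import Mathlib

def lucas : ℕ → ℤ
  | 0 => 2
  | 1 => 1
  | k + 2 => lucas (k + 1) + lucas k

lemma lucas_rec (k : ℕ) : lucas (k + 8) = 7 * lucas (k + 4) - lucas k := by
  show lucas (k + 2 + 2 + 2 + 2) = 7 * lucas (k + 2 + 2) - lucas k
  simp only [lucas]
  ring

lemma lucas_step (k : ℕ) : 1 ≤ lucas (k + 1) ∧ lucas (k + 1) ≤ lucas (k + 2) := by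
  induction k with
  | zero => decide
  | succ m ih =>
    obtain ⟨h1, h2⟩ := ih
    refine ⟨by linarith, ?_⟩
    have : lucas (m + 1 + 2) = lucas (m + 2) + lucas (m + 1) := rfl
    linarith

lemma lucas_succ_le {p : ℕ} (hp : 1 ≤ p) : lucas p ≤ lucas (p + 1) := by
  obtain ⟨p', rfl⟩ : ∃ q, p = q + 1 := ⟨p - 1, by omega⟩
  exact (lucas_step p').2

lemma lucas_mono {k m : ℕ} (hk : 1 ≤ k) (h : k ≤ m) : lucas k ≤ lucas m := by
  induction m, h using Nat.le_induction with
  | base => exact le_refl _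
  | succ p hp ih => exact le_trans ih (lucas_succ_le (le_trans hk hp))

lemma trace_key (n : ℕ) :
    ((!![6, 1; 5, 1] : Matrix (Fin 2) (Fin 2) ℤ) ^ (n + 1)).trace = lucas (4 * (n + 1)) ∧
    ((!![6, 1; 5, 1] : Matrix (Fin 2) (Fin 2) ℤ) ^ (n + 2)).trace = lucas (4 * (n + 2)) := by
  induction n with
  | zero =>
    constructor
    · show (!![6, 1; 5, 1] ^ 1 : Matrix (Fin 2) (Fin 2) ℤ).trace = lucas 4
      rw [pow_one]
      simp [Matrix.trace_fin_two]
      decide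
    · show (!![6, 1; 5, 1] ^ 2 : Matrix (Fin 2) (Fin 2) ℤ).trace = lucas 8
      rw [pow_two]
      simp [Matrix.trace_fin_two, Matrix.mul_apply, Fin.sum_univ_two]
      decide
  | succ m ih =>
    obtain ⟨h1, h2⟩ := ih
    refine ⟨h2, ?_⟩
    have hC2 : (!![6, 1; 5, 1] : Matrix (Fin 2) (Fin 2) ℤ) ^ 2
        = (7 : ℤ) • !![6, 1; 5, 1] - 1 := by
      rw [pow_two]
      ext i j
      fin_cases i <;> fin_cases j <;>
        simp [Matrix.mul_apply, Fin.sum_univ_two, Matrix.one_apply]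
    have hpow : (!![6, 1; 5, 1] : Matrix (Fin 2) (Fin 2) ℤ) ^ (m + 3)
        = (7 : ℤ) • (!![6, 1; 5, 1] : Matrix (Fin 2) (Fin 2) ℤ) ^ (m + 2)
          - (!![6, 1; 5, 1] : Matrix (Fin 2) (Fin 2) ℤ) ^ (m + 1) := by
      have : (m + 3) = (m + 1) + 2 := by ring
      rw [this, pow_add, hC2]
      rw [mul_sub, mul_one, Matrix.mul_smul]
      rw [← pow_succ]
    show ((!![6, 1; 5, 1] : Matrix (Fin 2) (Fin 2) ℤ) ^ (m + 3)).trace = lucas (4 * (m + 3))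
    rw [hpow, Matrix.trace_sub, Matrix.trace_smul, h1, h2]
    have : 4 * (m + 3) = 4 * (m + 1) + 8 := by ring
    rw [this, lucas_rec]
    have : 4 * (m + 1) + 4 = 4 * (m + 2) := by ring
    rw [this]
    simp

theorem stmt_18 (n : ℕ) (hn : 1 ≤ n) :
    let C : Matrix (Fin 2) (Fin 2) ℤ := !![6, 1; 5, 1]
    (C ^ n).trace = lucas (4 * n) ∧
      |(C ^ n + 1).det| = lucas (4 * n) + 2 ∧
      |(C ^ n - 1).det| = lucas (4 * n) - 2 := by
  intro C
  obtain ⟨m, rfl⟩ : ∃ m, n = m + 1 := ⟨n - 1, by omega⟩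
  have htr : (C ^ (m + 1)).trace = lucas (4 * (m + 1)) := (trace_key m).1
  have hdet : (C ^ (m + 1)).det = 1 := by
    rw [Matrix.det_pow]
    have : C.det = 1 := by simp [Matrix.det_fin_two_of, C]
    rw [this, one_pow]
  have hge : (7 : ℤ) ≤ lucas (4 * (m + 1)) := by
    have h4 : lucas 4 = 7 := by decide
    calc (7:ℤ) = lucas 4 := h4.symm
      _ ≤ lucas (4 * (m + 1)) := lucas_mono (by omega) (by omega)
  set M := C ^ (m + 1) with hM
  have h1 : (M + 1).det = M.det + M.trace + 1 := by
    simp [Matrix.det_fin_two, Matrix.trace_fin_two, Matrix.add_apply, Matrix.one_apply]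
    ring
  have h2 : (M - 1).det = M.det - M.trace + 1 := by
    simp [Matrix.det_fin_two, Matrix.trace_fin_two, Matrix.sub_apply, Matrix.one_apply]
    ring
  refine ⟨htr, ?_, ?_⟩
  · rw [h1, hdet, htr, abs_of_nonneg (by linarith)]; ring
  · rw [h2, hdet, htr, abs_of_nonpos (by linarith)]; ring
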